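/- Let 𝔄 be an excellent based A-algebra, 𝐜 a two-sided cell of I, and a the common value of the a-function on 𝐜. Let r ≥ 1 and (i_1, …, i_r) ∈ I^r with i_u ∈ 𝐜 for all u, and write b_{i_1} ⋯ b_{i_r} = Σ_{i∈I, k∈ℤ} N(i,k) v^k b_i. Then for every i ∈ 𝐜, N(i, −(r−1)a) = Σ h*_{j_1,i_2,j_2^!} h*_{j_2,i_3,j_3^!} ⋯ h*_{j_{r−1},i_r,j_r^!}, the sum over all (j_1, j_2, …, j_r) ∈ 𝐜^r with j_1 = i_1 and j_r = i. Equivalently, in the asymptotic ring 𝔄^∞ one has t_{i_1} t_{i_2} ⋯ t_{i_r} = Σ_{i∈𝐜} N(i, −(r−1)a) t_i. -/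

import Mathlib

open scoped Classical
open Finset
open Fin.NatCast

noncomputable section

/-- The ring `A = ℤ[v,v⁻¹]` of Laurent polynomials over `ℤ`. -/
abbrev LP : Type := LaurentPolynomial ℤ

/-- The coefficient of `v^n` in a Laurent polynomial. -/
def lcoeff (f : LP) (n : ℤ) : ℤ := (AddMonoidAlgebra.coeff f : ℤ →₀ ℤ) n

/-- A based `A`-algebra (Lusztig, 1.9), encoded by its structure constants
`h i i' j` (the coefficient of `b j` in `b i * b i'`), the coordinates `e i` of the
unit element, the involution `einv` of the index set (written `i ↦ i^!`), and the
distinguished subset `I0` of `{i | i^! = i}`. -/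
structure BasedAlgebra (I : Type) [Fintype I] [DecidableEq I] where
  h : I → I → I → LP
  e : I → LP
  einv : I → I
  I0 : Finset I
  einv_invol : ∀ i, einv (einv i) = i
  mul_assoc' : ∀ i j k l, ∑ m, h i j m * h m k l = ∑ m, h j k m * h i m l
  one_mul' : ∀ j k, ∑ i, e i * h i j k = if j = k then 1 else 0
  mul_one' : ∀ j k, ∑ i, e i * h j i k = if j = k then 1 else 0
  anti' : ∀ i i' j, h (einv i) (einv i') (einv j) = h i' i j
  I0_fixed : ∀ i ∈ I0, einv i = i

namespace BasedAlgebra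

variable {I : Type} [Fintype I] [DecidableEq I]

/-- The preorder `⪯_left` on `I`, generated by: `j ⪯_left i` if `h i' i j ≠ 0` for some `i'`. -/
def leLeft (B : BasedAlgebra I) : I → I → Prop :=
  Relation.ReflTransGen (fun j i => ∃ i', B.h i' i j ≠ 0)

/-- The preorder `⪯` on `I`, generated by:
`j ⪯ i` if `h i i' j ≠ 0` or `h i' i j ≠ 0` for some `i'`. -/
def leTwo (B : BasedAlgebra I) : I → I → Prop :=
  Relation.ReflTransGen (fun j i => ∃ i', B.h i i' j ≠ 0 ∨ B.h i' i j ≠ 0)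

/-- The equivalence relation `∼_left` whose classes are the left cells. -/
def simLeft (B : BasedAlgebra I) (i j : I) : Prop := B.leLeft i j ∧ B.leLeft j i

/-- The equivalence relation `∼` whose classes are the two-sided cells. -/
def simTwo (B : BasedAlgebra I) (i j : I) : Prop := B.leTwo i j ∧ B.leTwo j i

/-- `c` is a left cell. -/
def IsLeftCell (B : BasedAlgebra I) (c : Set I) : Prop := ∃ i, c = {j | B.simLeft j i}

/-- `c` is a two-sided cell. -/
def IsTwoCell (B : BasedAlgebra I) (c : Set I) : Prop := ∃ i, c = {j | B.simTwo j i}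

/-- Lusztig's `a`-function: `a j` is the smallest `m : ℕ` such that
`h i i' j ∈ v^{-m} ℤ[v]` for all `i, i'`. -/
def af (B : BasedAlgebra I) (j : I) : ℕ :=
  sInf {m : ℕ | ∀ i i' : I, ∀ n : ℤ, n < -(m : ℤ) → lcoeff (B.h i i' j) n = 0}

/-- The leading coefficients: `h i i' (j^!) = (hstar i i' j) v^{-a(j^!)} +` higher powers. -/
def hstar (B : BasedAlgebra I) (i i' j : I) : ℤ :=
  lcoeff (B.h i i' (B.einv j)) (-(B.af (B.einv j) : ℤ))

/-- The based algebra is *excellent* if properties Q1–Q11 of Lusztig (1.9) hold. -/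
structure Excellent (B : BasedAlgebra I) : Prop where
  q1 : ∀ j ∈ B.I0, ∀ i i', B.hstar i i' j ≠ 0 → i' = B.einv i
  q2 : ∀ i, ∃! j, j ∈ B.I0 ∧ B.hstar (B.einv i) i j ≠ 0
  q3 : ∀ i' i, B.leTwo i' i → B.af i ≤ B.af i'
  q4 : ∀ j ∈ B.I0, ∀ i, B.hstar (B.einv i) i j ≠ 0 → B.hstar (B.einv i) i j = 1
  q5 : ∀ i j k, B.hstar i j k = B.hstar j k i
  q6 : ∀ i j k, B.hstar i j k ≠ 0 →
    B.simLeft i (B.einv j) ∧ B.simLeft j (B.einv k) ∧ B.simLeft k (B.einv i)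
  q7 : ∀ i' i, B.leLeft i' i → B.af i' = B.af i → B.simLeft i' i
  q8 : ∀ i' i, B.leTwo i' i → B.af i' = B.af i → B.simTwo i' i
  q9a : ∀ i, ∃! j, j ∈ B.I0 ∧ B.simLeft j i
  q9b : ∀ i j, j ∈ B.I0 → B.simLeft j i → B.hstar (B.einv i) i j = 1
  q10 : ∀ i, B.simTwo i (B.einv i)
  q11 : ∀ i i' j k, B.af j = B.af k → ∀ p q : ℤ,
    ∑ j', lcoeff (B.h k i' j') p * lcoeff (B.h i j' j) q
      = ∑ j', lcoeff (B.h i k j') q * lcoeff (B.h j' i' j) p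

/-- The multiplication of the asymptotic ring `𝔄^∞`, on coordinates with respect to the
basis `{t_i}`: `t_i t_{i'} = ∑_j h*_{i,i',j^!} t_j`. -/
def tmul (B : BasedAlgebra I) (x y : I → ℤ) : I → ℤ :=
  fun j => ∑ i, ∑ i', x i * y i' * B.hstar i i' (B.einv j)

/-- The element `∑_{i ∈ I₀} t_i` of `𝔄^∞`. -/
def tone (B : BasedAlgebra I) : I → ℤ := fun i => if i ∈ B.I0 then 1 else 0

/-- The basis element `t_i` of `𝔄^∞`. -/
def tbasis (B : BasedAlgebra I) (i : I) : I → ℤ := fun j => if j = i then 1 else 0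

end BasedAlgebra

namespace BasedAlgebra

variable {I : Type} [Fintype I] [DecidableEq I]

/-- The coordinates of the basis element `b_i` of `𝔄`. -/
def bvec (_B : BasedAlgebra I) (i : I) : I → LP := fun j => if j = i then 1 else 0

/-- Multiplication of `𝔄`, on coordinates with respect to the basis `{b_i}`. -/
def amul (B : BasedAlgebra I) (x y : I → LP) : I → LP :=
  fun j => ∑ i, ∑ i', x i * y i' * B.h i i' j

/-- The product `b_{f 0} b_{f 1} ⋯ b_{f (n-1)}` in `𝔄`, on coordinates. -/
def aprod (B : BasedAlgebra I) (f : ℕ → I) : ℕ → (I → LP)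
  | 0 => B.e
  | n + 1 => B.amul (B.aprod f n) (B.bvec (f n))

/-- The product `t_{f 0} t_{f 1} ⋯ t_{f (n-1)}` in `𝔄^∞`, on coordinates. -/
def tprod (B : BasedAlgebra I) (f : ℕ → I) : ℕ → (I → ℤ)
  | 0 => B.tone
  | n + 1 => B.tmul (B.tprod f n) (B.tbasis (f n))

end BasedAlgebra

-- ===================== Auxiliary lemmas =====================

theorem lcoeff_zero' (n : ℤ) : lcoeff (0 : LP) n = 0 := rfl

theorem lcoeff_one' (n : ℤ) : lcoeff (1 : LP) n = if n = 0 then 1 else 0 := by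
  rw [lcoeff]
  show (Finsupp.single (0:ℤ) (1:ℤ)) n = _
  rw [Finsupp.single_apply]
  simp [eq_comm]

theorem lcoeff_sum' {α : Type*} (s : Finset α) (F : α → LP) (n : ℤ) :
    lcoeff (∑ i ∈ s, F i) n = ∑ i ∈ s, lcoeff (F i) n := by
  rw [lcoeff, AddMonoidAlgebra.coeff_sum]; exact Finsupp.finset_sum_apply s _ n

theorem lcoeff_mul' (f g : LP) (n : ℤ) :
    lcoeff (f * g) n = ∑ p ∈ f.coeff.support, lcoeff f p * lcoeff g (n - p) := by
  rw [lcoeff, AddMonoidAlgebra.coeff_mul, Finsupp.sum]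
  refine Finset.sum_congr rfl fun p hp => ?_
  rw [Finsupp.sum]
  have h1 : ∀ b : ℤ, (if p + b = n then f.coeff p * g.coeff b else 0)
      = (if b = n - p then f.coeff p * g.coeff b else 0) := by
    intro b; congr 1
    apply propext; constructor <;> intro h <;> omega
  rw [Finset.sum_congr rfl fun b _ => h1 b, Finset.sum_ite_eq' g.coeff.support (n - p)]
  by_cases hmem : n - p ∈ g.coeff.support
  · rw [if_pos hmem]; rfl
  · rw [if_neg hmem]
    have : g.coeff (n - p) = 0 := Finsupp.notMem_support_iff.1 hmem
    show (0:ℤ) = f.coeff p * g.coeff (n - p)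
    rw [this, mul_zero]

theorem lcoeff_mul_zero' (f g : LP) (A B n : ℤ) (hf : ∀ p, p < A → lcoeff f p = 0)
    (hg : ∀ q, q < B → lcoeff g q = 0) (hn : n < A + B) : lcoeff (f * g) n = 0 := by
  rw [lcoeff_mul']
  refine Finset.sum_eq_zero fun p _ => ?_
  rcases lt_or_ge p A with h | h
  · rw [hf p h, zero_mul]
  · rw [hg (n - p) (by omega), mul_zero]

theorem lcoeff_mul_low' (f g : LP) (A B : ℤ) (hf : ∀ p, p < A → lcoeff f p = 0)
    (hg : ∀ q, q < B → lcoeff g q = 0) :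
    lcoeff (f * g) (A + B) = lcoeff f A * lcoeff g B := by
  rw [lcoeff_mul', Finset.sum_eq_single A]
  · rw [add_sub_cancel_left]
  · intro p _ hpA
    rcases lt_or_ge p A with h | h
    · rw [hf p h, zero_mul]
    · rw [hg (A + B - p) (by omega), mul_zero]
  · intro hA
    have : lcoeff f A = 0 := Finsupp.notMem_support_iff.1 hA
    rw [this, zero_mul]

theorem ne_zero_of_lcoeff {f : LP} {n : ℤ} (h : lcoeff f n ≠ 0) : f ≠ 0 := by
  intro hf; exact h (by rw [hf]; rfl)

namespace BasedAlgebra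

variable {I : Type} [Fintype I] [DecidableEq I] (B : BasedAlgebra I)

theorem af_spec (j : I) : ∀ i i' : I, ∀ n : ℤ, n < -(B.af j : ℤ) → lcoeff (B.h i i' j) n = 0 := by
  have : B.af j ∈ {m : ℕ | ∀ i i' : I, ∀ n : ℤ, n < -(m : ℤ) → lcoeff (B.h i i' j) n = 0} := by
    apply Nat.sInf_mem
    refine ⟨Finset.univ.sup (fun i : I => Finset.univ.sup fun i' : I =>
      (B.h i i' j).coeff.support.sup Int.natAbs), fun i i' n hn => ?_⟩
    by_contra hne
    have hmem : n ∈ (B.h i i' j).coeff.support := Finsupp.mem_support_iff.2 hne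
    have h1 : n.natAbs ≤ (B.h i i' j).coeff.support.sup Int.natAbs := Finset.le_sup hmem
    have h2 : (B.h i i' j).coeff.support.sup Int.natAbs ≤
        Finset.univ.sup fun i'' : I => (B.h i i'' j).coeff.support.sup Int.natAbs :=
      Finset.le_sup (f := fun i'' : I => (B.h i i'' j).coeff.support.sup Int.natAbs) (Finset.mem_univ i')
    have h3 : (Finset.univ.sup fun i' : I => (B.h i i' j).coeff.support.sup Int.natAbs) ≤
        Finset.univ.sup (fun i : I => Finset.univ.sup fun i' : I =>
          (B.h i i' j).coeff.support.sup Int.natAbs) :=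
      Finset.le_sup (f := fun i : I => Finset.univ.sup fun i' : I =>
          (B.h i i' j).coeff.support.sup Int.natAbs) (Finset.mem_univ i)
    omega
  exact this

theorem hstar_eq (i i' j : I) :
    B.hstar i i' (B.einv j) = lcoeff (B.h i i' j) (-(B.af j : ℤ)) := by
  rw [hstar, B.einv_invol]

theorem leLeft_leTwo {i j : I} (h : B.leLeft i j) : B.leTwo i j :=
  Relation.ReflTransGen.mono (fun a b (hab : ∃ i', B.h i' b a ≠ 0) =>
    (Exists.imp (fun _ h => Or.inr h) hab : ∃ i', B.h b i' a ≠ 0 ∨ B.h i' b a ≠ 0)) i j h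

theorem simLeft_simTwo {i j : I} (h : B.simLeft i j) : B.simTwo i j :=
  ⟨B.leLeft_leTwo h.1, B.leLeft_leTwo h.2⟩

theorem simTwo_symm {i j : I} (h : B.simTwo i j) : B.simTwo j i := ⟨h.2, h.1⟩

theorem simTwo_trans {i j k : I} (h1 : B.simTwo i j) (h2 : B.simTwo j k) : B.simTwo i k :=
  ⟨h1.1.trans h2.1, h2.2.trans h1.2⟩

theorem leTwo_of_h {i i' j : I} (h : B.h i i' j ≠ 0) : B.leTwo j i :=
  Relation.ReflTransGen.single ⟨i', Or.inl h⟩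

theorem mem_cell {c : Set I} (hc : B.IsTwoCell c) {i j : I} (hi : i ∈ c)
    (hj : B.simTwo j i) : j ∈ c := by
  obtain ⟨i₀, rfl⟩ := hc
  exact B.simTwo_trans hj hi

theorem aprod_succ (f : ℕ → I) (n : ℕ) (j : I) :
    B.aprod f (n + 1) j = ∑ i, B.aprod f n i * B.h i (f n) j := by
  show B.amul (B.aprod f n) (B.bvec (f n)) j = _
  rw [amul]
  refine Finset.sum_congr rfl fun i _ => ?_
  rw [show (∑ i', B.aprod f n i * B.bvec (f n) i' * B.h i i' j)
      = ∑ i', if i' = f n then B.aprod f n i * B.h i i' j else 0 from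
    Finset.sum_congr rfl fun i' _ => by
      simp [bvec, mul_ite, ite_mul, mul_one, mul_zero, zero_mul]]
  rw [Finset.sum_ite_eq' Finset.univ (f n)]
  simp

theorem tprod_succ (f : ℕ → I) (n : ℕ) (j : I) :
    B.tprod f (n + 1) j = ∑ i, B.tprod f n i * B.hstar i (f n) (B.einv j) := by
  show B.tmul (B.tprod f n) (B.tbasis (f n)) j = _
  rw [tmul]
  refine Finset.sum_congr rfl fun i _ => ?_
  rw [show (∑ i', B.tprod f n i * B.tbasis (f n) i' * B.hstar i i' (B.einv j))
      = ∑ i', if i' = f n then B.tprod f n i * B.hstar i i' (B.einv j) else 0 from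
    Finset.sum_congr rfl fun i' _ => by
      simp [tbasis, mul_ite, ite_mul, mul_one, mul_zero, zero_mul]]
  rw [Finset.sum_ite_eq' Finset.univ (f n)]
  simp

theorem aprod_one (f : ℕ → I) (j : I) :
    B.aprod f 1 j = if f 0 = j then 1 else 0 := by
  rw [B.aprod_succ f 0 j]
  exact B.one_mul' (f 0) j

/-- The unit property of `𝔄^∞`: `(∑_{i∈I0} t_i) t_k = t_k`, on coordinates. -/
theorem sum_I0_hstar (hB : B.Excellent) (k j : I) :
    ∑ i ∈ B.I0, B.hstar i k (B.einv j) = if k = j then 1 else 0 := by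
  have hq5 : ∀ i, B.hstar i k (B.einv j) = B.hstar k (B.einv j) i := fun i => hB.q5 i k (B.einv j)
  by_cases hkj : k = j
  · subst hkj
    rw [if_pos rfl]
    obtain ⟨j₀, ⟨hj₀I, hj₀ne⟩, huniq⟩ := hB.q2 (B.einv k)
    rw [B.einv_invol] at hj₀ne
    rw [Finset.sum_eq_single_of_mem j₀ hj₀I]
    · rw [hq5 j₀]
      have := hB.q4 j₀ hj₀I (B.einv k)
      rw [B.einv_invol] at this
      exact this hj₀ne
    · intro i hiI hne
      rw [hq5 i]
      by_contra hne0
      exact hne (huniq i ⟨hiI, by rw [B.einv_invol]; exact hne0⟩)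
  · rw [if_neg hkj]
    refine Finset.sum_eq_zero fun i hiI => ?_
    rw [hq5 i]
    by_contra hne0
    have h2 := hB.q1 i hiI k (B.einv j) hne0
    have h3 := congrArg B.einv h2
    rw [B.einv_invol, B.einv_invol] at h3
    exact hkj h3.symm

theorem tprod_one (hB : B.Excellent) (f : ℕ → I) (j : I) :
    B.tprod f 1 j = if f 0 = j then 1 else 0 := by
  rw [B.tprod_succ f 0 j]
  rw [show (∑ i, B.tprod f 0 i * B.hstar i (f 0) (B.einv j))
      = ∑ i, if i ∈ B.I0 then B.hstar i (f 0) (B.einv j) else 0 from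
    Finset.sum_congr rfl fun i _ => by
      show B.tone i * _ = _
      simp [tone, ite_mul, one_mul, zero_mul]]
  rw [Finset.sum_ite_mem, Finset.univ_inter]
  exact B.sum_I0_hstar hB (f 0) j

end BasedAlgebra

namespace BasedAlgebra

variable {I : Type} [Fintype I] [DecidableEq I] (B : BasedAlgebra I)

theorem fin_cast_castSucc (r u : ℕ) (hu : u < r + 1) :
    ((u : Fin (r + 2))) = Fin.castSucc ((u : Fin (r + 1))) := by
  apply Fin.ext
  rw [Fin.coe_castSucc, Fin.val_cast_of_lt hu, Fin.val_cast_of_lt (by omega)]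

theorem fin_cast_last (r : ℕ) : (((r + 1 : ℕ)) : Fin (r + 2)) = Fin.last (r + 1) := by
  apply Fin.ext
  rw [Fin.val_last, Fin.val_cast_of_lt (by omega)]

theorem fin_cast_last' (r : ℕ) : ((r : ℕ) : Fin (r + 1)) = Fin.last r := by
  apply Fin.ext
  rw [Fin.val_last, Fin.val_cast_of_lt (by omega)]

theorem sum_snoc {M : Type*} [AddCommMonoid M] (r : ℕ) (F : (Fin (r + 2) → I) → M) :
    ∑ j : Fin (r + 2) → I, F j = ∑ g : Fin (r + 1) → I, ∑ x : I, F (Fin.snoc g x) := by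
  have h1 : ∑ j : Fin (r + 2) → I, F j
      = ∑ p : (Fin (r + 1) → I) × I, F (Fin.snoc p.1 p.2) := by
    refine (Fintype.sum_bijective
      (fun p : (Fin (r + 1) → I) × I => (Fin.snoc p.1 p.2 : Fin (r + 2) → I))
      ?_ (fun p => F (Fin.snoc p.1 p.2)) F (fun p => rfl)).symm
    rw [Function.bijective_iff_has_inverse]
    refine ⟨fun j => (Fin.init j, j (Fin.last (r + 1))), fun p => ?_,
      fun j => Fin.snoc_init_self j⟩
    obtain ⟨g, x⟩ := p
    simp [Fin.init_snoc, Fin.snoc_last]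
  rw [h1]
  exact Fintype.sum_prod_type _

theorem snoc_zero_eq (r : ℕ) (g : Fin (r + 1) → I) (x : I) :
    (Fin.snoc g x : Fin (r + 2) → I) 0 = g 0 := by
  have : (0 : Fin (r + 2)) = Fin.castSucc (0 : Fin (r + 1)) := by
    apply Fin.ext; simp
  rw [this, Fin.snoc_castSucc]

theorem snoc_forall_mem (r : ℕ) (c : Set I) (g : Fin (r + 1) → I) (x : I) :
    (∀ u, (Fin.snoc g x : Fin (r + 2) → I) u ∈ c) ↔ (∀ u, g u ∈ c) ∧ x ∈ c := by
  constructor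
  · intro H
    refine ⟨fun u => ?_, ?_⟩
    · have := H u.castSucc; rwa [Fin.snoc_castSucc] at this
    · have := H (Fin.last (r + 1)); rwa [Fin.snoc_last] at this
  · rintro ⟨H1, H2⟩ u
    refine Fin.lastCases ?_ ?_ u
    · rw [Fin.snoc_last]; exact H2
    · intro w; rw [Fin.snoc_castSucc]; exact H1 w

/-- `tprod` equals the explicit sum over sequences in the cell. -/
theorem tprod_eq_sum (hB : B.Excellent) {c : Set I} (hc : B.IsTwoCell c)
    (f : ℕ → I) : ∀ r : ℕ, (∀ u ≤ r, f u ∈ c) → ∀ i : I,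
    B.tprod f (r + 1) i = ∑ j : Fin (r + 1) → I,
      if (∀ u, j u ∈ c) ∧ j 0 = f 0 ∧ j (Fin.last r) = i then
        ∏ u ∈ Finset.range r,
          B.hstar (j (u : Fin (r + 1))) (f (u + 1))
            (B.einv (j ((u + 1 : ℕ) : Fin (r + 1))))
      else 0 := by
  intro r
  induction r with
  | zero =>
    intro hf i
    rw [B.tprod_one hB f i]
    have step1 : (∑ j : Fin 1 → I,
        if (∀ u, j u ∈ c) ∧ j 0 = f 0 ∧ j (Fin.last 0) = i then
          ∏ u ∈ Finset.range 0,
            B.hstar (j (u : Fin 1)) (f (u + 1)) (B.einv (j ((u + 1 : ℕ) : Fin 1)))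
        else 0)
        = ∑ x : I, if x = i ∧ (i ∈ c ∧ f 0 = i) then 1 else 0 := by
      refine (Fintype.sum_bijective (fun x : I => (fun _ : Fin 1 => x)) ?_ _ _ fun x => ?_).symm
      · rw [Function.bijective_iff_has_inverse]
        exact ⟨fun j => j 0, fun x => rfl, fun j => by funext u; rw [Subsingleton.elim u 0]⟩
      · rw [Finset.prod_range_zero]
        congr 1
        apply propext
        constructor
        · rintro ⟨h1, h2, h3⟩
          exact ⟨fun _ => by rw [h1]; exact h2, h1.trans h3.symm, h1⟩
        · rintro ⟨h1, h2, h3⟩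
          exact ⟨h3, h3 ▸ h1 0, h2.symm.trans h3⟩
    rw [step1]
    rw [Finset.sum_congr rfl fun x _ => ite_and (x = i) (i ∈ c ∧ f 0 = i) (1 : ℤ) 0,
      Finset.sum_ite_eq' Finset.univ i, if_pos (Finset.mem_univ i)]
    by_cases hfi : f 0 = i
    · rw [if_pos hfi, if_pos ⟨hfi ▸ hf 0 le_rfl, hfi⟩]
    · rw [if_neg hfi, if_neg (fun hq => hfi hq.2)]
  | succ r ih =>
    intro hf i
    have hf' : ∀ u ≤ r, f u ∈ c := fun u hu => hf u (Nat.le_succ_of_le hu)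
    have hfr1 : f (r + 1) ∈ c := hf (r + 1) le_rfl
    rw [B.tprod_succ f (r + 1) i]
    have lhs_eq : (∑ i', B.tprod f (r + 1) i' * B.hstar i' (f (r + 1)) (B.einv i))
        = ∑ g : Fin (r + 1) → I,
            if (∀ u, g u ∈ c) ∧ g 0 = f 0 then
              (∏ u ∈ Finset.range r,
              B.hstar (g (u : Fin (r + 1))) (f (u + 1))
                (B.einv (g ((u + 1 : ℕ) : Fin (r + 1))))) * B.hstar (g (Fin.last r)) (f (r + 1)) (B.einv i)
            else 0 := by
      have e1 : ∀ i' : I, B.tprod f (r + 1) i' * B.hstar i' (f (r + 1)) (B.einv i)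
          = ∑ g : Fin (r + 1) → I,
              if (∀ u, g u ∈ c) ∧ g 0 = f 0 ∧ g (Fin.last r) = i' then
                (∏ u ∈ Finset.range r,
              B.hstar (g (u : Fin (r + 1))) (f (u + 1))
                (B.einv (g ((u + 1 : ℕ) : Fin (r + 1))))) * B.hstar i' (f (r + 1)) (B.einv i)
              else 0 := by
        intro i'
        rw [ih hf' i', Finset.sum_mul]
        exact Finset.sum_congr rfl fun g _ => by rw [ite_mul, zero_mul]
      rw [Finset.sum_congr rfl fun i' _ => e1 i', Finset.sum_comm]
      refine Finset.sum_congr rfl fun g _ => ?_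
      have e2 : ∀ i' : I,
          (if (∀ u, g u ∈ c) ∧ g 0 = f 0 ∧ g (Fin.last r) = i' then
            (∏ u ∈ Finset.range r,
              B.hstar (g (u : Fin (r + 1))) (f (u + 1))
                (B.einv (g ((u + 1 : ℕ) : Fin (r + 1))))) * B.hstar i' (f (r + 1)) (B.einv i) else 0)
          = if i' = g (Fin.last r) then
              (if (∀ u, g u ∈ c) ∧ g 0 = f 0 then
                (∏ u ∈ Finset.range r,
              B.hstar (g (u : Fin (r + 1))) (f (u + 1))
                (B.einv (g ((u + 1 : ℕ) : Fin (r + 1))))) * B.hstar i' (f (r + 1)) (B.einv i) else 0)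
            else 0 := by
        intro i'
        by_cases h1 : i' = g (Fin.last r)
        · subst h1
          rw [if_pos rfl]
          by_cases h2 : (∀ u, g u ∈ c) ∧ g 0 = f 0
          · rw [if_pos ⟨h2.1, h2.2, rfl⟩, if_pos h2]
          · rw [if_neg fun hq => h2 ⟨hq.1, hq.2.1⟩, if_neg h2]
        · rw [if_neg fun hq => h1 hq.2.2.symm, if_neg h1]
      rw [Finset.sum_congr rfl fun i' _ => e2 i', Finset.sum_ite_eq' Finset.univ,
        if_pos (Finset.mem_univ _)]
    rw [lhs_eq]
    -- now the RHS
    rw [sum_snoc r]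
    refine Finset.sum_congr rfl fun g _ => ?_
    -- compute the inner sum over x
    have hcond : ∀ x : I,
        ((∀ u, (Fin.snoc g x : Fin (r + 2) → I) u ∈ c) ∧ (Fin.snoc g x : Fin (r + 2) → I) 0 = f 0 ∧
          (Fin.snoc g x : Fin (r + 2) → I) (Fin.last (r + 1)) = i)
        ↔ (x = i ∧ ((∀ u, g u ∈ c) ∧ g 0 = f 0 ∧ i ∈ c)) := by
      intro x
      rw [snoc_forall_mem, snoc_zero_eq, Fin.snoc_last]
      constructor
      · rintro ⟨⟨h1, h2⟩, h3, h4⟩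
        exact ⟨h4, h1, h3, h4 ▸ h2⟩
      · rintro ⟨h1, h2, h3, h4⟩
        exact ⟨⟨h2, h1 ▸ h4⟩, h3, h1⟩
    have hprod : ∀ x : I,
        (∏ u ∈ Finset.range (r + 1),
          B.hstar ((Fin.snoc g x : Fin (r + 2) → I) (u : Fin (r + 2))) (f (u + 1))
            (B.einv ((Fin.snoc g x : Fin (r + 2) → I) ((u + 1 : ℕ) : Fin (r + 2)))))
        = (∏ u ∈ Finset.range r,
              B.hstar (g (u : Fin (r + 1))) (f (u + 1))
                (B.einv (g ((u + 1 : ℕ) : Fin (r + 1))))) * B.hstar (g (Fin.last r)) (f (r + 1)) (B.einv x) := by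
      intro x
      rw [Finset.prod_range_succ]
      have hinit : ∀ u ∈ Finset.range r,
          B.hstar ((Fin.snoc g x : Fin (r + 2) → I) (u : Fin (r + 2))) (f (u + 1))
              (B.einv ((Fin.snoc g x : Fin (r + 2) → I) ((u + 1 : ℕ) : Fin (r + 2))))
          = B.hstar (g (u : Fin (r + 1))) (f (u + 1))
              (B.einv (g ((u + 1 : ℕ) : Fin (r + 1)))) := by
        intro u hu
        rw [Finset.mem_range] at hu
        rw [fin_cast_castSucc r u (Nat.lt_succ_of_lt hu), fin_cast_castSucc r (u + 1) (Nat.succ_lt_succ hu)]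
        simp only [Fin.snoc_castSucc]
      have hl : B.hstar ((Fin.snoc g x : Fin (r + 2) → I) ((r : ℕ) : Fin (r + 2))) (f (r + 1))
            (B.einv ((Fin.snoc g x : Fin (r + 2) → I) ((r + 1 : ℕ) : Fin (r + 2))))
          = B.hstar (g (Fin.last r)) (f (r + 1)) (B.einv x) := by
        rw [fin_cast_castSucc r r (Nat.lt_succ_self r), fin_cast_last r]
        simp only [Fin.snoc_castSucc, Fin.snoc_last]
        rw [fin_cast_last' r]
      rw [Finset.prod_congr rfl hinit, hl]
    have inner : (∑ x : I,
        if (∀ u, (Fin.snoc g x : Fin (r + 2) → I) u ∈ c) ∧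
            (Fin.snoc g x : Fin (r + 2) → I) 0 = f 0 ∧
            (Fin.snoc g x : Fin (r + 2) → I) (Fin.last (r + 1)) = i then
          ∏ u ∈ Finset.range (r + 1),
            B.hstar ((Fin.snoc g x : Fin (r + 2) → I) (u : Fin (r + 2))) (f (u + 1))
              (B.einv ((Fin.snoc g x : Fin (r + 2) → I) ((u + 1 : ℕ) : Fin (r + 2))))
        else 0)
        = if (∀ u, g u ∈ c) ∧ g 0 = f 0 ∧ i ∈ c then
            (∏ u ∈ Finset.range r,
              B.hstar (g (u : Fin (r + 1))) (f (u + 1))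
                (B.einv (g ((u + 1 : ℕ) : Fin (r + 1))))) * B.hstar (g (Fin.last r)) (f (r + 1)) (B.einv i)
          else 0 := by
      have e3 : ∀ x : I,
          (if (∀ u, (Fin.snoc g x : Fin (r + 2) → I) u ∈ c) ∧
              (Fin.snoc g x : Fin (r + 2) → I) 0 = f 0 ∧
              (Fin.snoc g x : Fin (r + 2) → I) (Fin.last (r + 1)) = i then
            ∏ u ∈ Finset.range (r + 1),
              B.hstar ((Fin.snoc g x : Fin (r + 2) → I) (u : Fin (r + 2))) (f (u + 1))
                (B.einv ((Fin.snoc g x : Fin (r + 2) → I) ((u + 1 : ℕ) : Fin (r + 2))))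
          else 0)
          = if x = i then
              (if (∀ u, g u ∈ c) ∧ g 0 = f 0 ∧ i ∈ c then
                (∏ u ∈ Finset.range r,
              B.hstar (g (u : Fin (r + 1))) (f (u + 1))
                (B.einv (g ((u + 1 : ℕ) : Fin (r + 1))))) * B.hstar (g (Fin.last r)) (f (r + 1)) (B.einv x)
              else 0)
            else 0 := by
        intro x
        rw [hprod x]
        by_cases h1 : x = i
        · rw [if_pos h1]
          by_cases h2 : (∀ u, g u ∈ c) ∧ g 0 = f 0 ∧ i ∈ c
          · rw [if_pos ((hcond x).2 ⟨h1, h2⟩), if_pos h2]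
          · rw [if_neg fun hq => h2 ((hcond x).1 hq).2, if_neg h2]
        · rw [if_neg fun hq => h1 ((hcond x).1 hq).1, if_neg h1]
      rw [Finset.sum_congr rfl fun x _ => e3 x, Finset.sum_ite_eq' Finset.univ,
        if_pos (Finset.mem_univ _)]
    refine Eq.trans ?_ inner.symm
    -- final comparison
    by_cases hic : i ∈ c
    · exact if_congr (by tauto) rfl rfl
    · rw [if_neg (show ¬((∀ u, g u ∈ c) ∧ g 0 = f 0 ∧ i ∈ c) from fun hq => hic hq.2.2)]
      by_cases hAB : (∀ u, g u ∈ c) ∧ g 0 = f 0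
      · rw [if_pos hAB]
        have hzero : B.hstar (g (Fin.last r)) (f (r + 1)) (B.einv i) = 0 := by
          by_contra hne
          obtain ⟨_, h2, _⟩ := hB.q6 (g (Fin.last r)) (f (r + 1)) (B.einv i) hne
          rw [B.einv_invol] at h2
          exact hic (B.mem_cell hc hfr1 (B.simTwo_symm (B.simLeft_simTwo h2)))
        rw [hzero, mul_zero]
      · rw [if_neg hAB]

end BasedAlgebra

namespace BasedAlgebra

variable {I : Type} [Fintype I] [DecidableEq I] (B : BasedAlgebra I)

theorem tprod_zero_of_not_mem (hB : B.Excellent) {c : Set I} (hc : B.IsTwoCell c)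
    (f : ℕ → I) (r : ℕ) (hf : ∀ u ≤ r, f u ∈ c) {i : I} (hi : i ∉ c) :
    B.tprod f (r + 1) i = 0 := by
  rw [B.tprod_eq_sum hB hc f r hf i]
  refine Finset.sum_eq_zero fun g _ => ?_
  rw [if_neg]
  rintro ⟨hg, _, hlast⟩
  exact hi (hlast ▸ hg (Fin.last r))

/-- The main induction: degree bound and identification of the lowest coefficient. -/
theorem main_induction (hB : B.Excellent) {c : Set I} (hc : B.IsTwoCell c)
    (a0 : ℕ) (ha0 : ∀ i ∈ c, B.af i = a0) (f : ℕ → I) :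
    ∀ r : ℕ, (∀ u ≤ r, f u ∈ c) →
      (∀ i, B.aprod f (r + 1) i ≠ 0 → B.leTwo i (f 0)) ∧
      (∀ i ∈ c, ∀ p : ℤ, p < -((r : ℤ) * (a0 : ℤ)) → lcoeff (B.aprod f (r + 1) i) p = 0) ∧
      (∀ i ∈ c, lcoeff (B.aprod f (r + 1) i) (-((r : ℤ) * (a0 : ℤ))) = B.tprod f (r + 1) i) := by
  intro r
  induction r with
  | zero =>
    intro hf
    refine ⟨?_, ?_, ?_⟩
    · intro i hne
      rw [B.aprod_one f i] at hne
      by_cases hfi : f 0 = i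
      · exact hfi ▸ Relation.ReflTransGen.refl
      · rw [if_neg hfi] at hne
        exact absurd rfl hne
    · intro i _ p hp
      rw [B.aprod_one f i]
      have hp0 : p < 0 := by push_cast at hp ⊢; omega
      by_cases hfi : f 0 = i
      · rw [if_pos hfi, lcoeff_one']
        rw [if_neg (by omega)]
      · rw [if_neg hfi]; rfl
    · intro i hi
      rw [B.aprod_one f i, B.tprod_one hB f i]
      have h0 : -((0 : ℕ) : ℤ) * (a0 : ℤ) = 0 := by push_cast; ring
      by_cases hfi : f 0 = i
      · rw [if_pos hfi, if_pos hfi]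
        rw [show -(((0 : ℕ) : ℤ) * (a0 : ℤ)) = 0 by push_cast; ring, lcoeff_one', if_pos rfl]
      · rw [if_neg hfi, if_neg hfi]
        rfl
  | succ r ih =>
    intro hf
    have hf' : ∀ u ≤ r, f u ∈ c := fun u hu => hf u (Nat.le_succ_of_le hu)
    obtain ⟨ihB, ihA, ihC⟩ := ih hf'
    have hfr1 : f (r + 1) ∈ c := hf (r + 1) le_rfl
    have hf0 : f 0 ∈ c := hf 0 (Nat.zero_le _)
    -- term analysis
    have key : ∀ j ∈ c, ∀ i : I, ∀ p q : ℤ,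
        lcoeff (B.aprod f (r + 1) i) p * lcoeff (B.h i (f (r + 1)) j) q ≠ 0 →
        i ∈ c ∧ -((r : ℤ) * (a0 : ℤ)) ≤ p ∧ -(a0 : ℤ) ≤ q := by
      intro j hj i p q hne
      have h1 : lcoeff (B.aprod f (r + 1) i) p ≠ 0 := left_ne_zero_of_mul hne
      have h2 : lcoeff (B.h i (f (r + 1)) j) q ≠ 0 := right_ne_zero_of_mul hne
      have hh : B.h i (f (r + 1)) j ≠ 0 := fun h => h2 (by rw [h]; rfl)
      have hji : B.leTwo j i := B.leTwo_of_h hh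
      have hif0 : B.leTwo i (f 0) := ihB i (fun h => h1 (by rw [h]; rfl))
      have haj : B.af j = a0 := ha0 j hj
      have hai : B.af i = a0 := by
        have u1 : B.af i ≤ B.af j := hB.q3 j i hji
        have u2 : B.af (f 0) ≤ B.af i := hB.q3 i (f 0) hif0
        have u3 : B.af (f 0) = a0 := ha0 (f 0) hf0
        omega
      have hic : i ∈ c := B.mem_cell hc hj (B.simTwo_symm (hB.q8 j i hji (by omega)))
      refine ⟨hic, ?_, ?_⟩
      · by_contra hlt
        exact h1 (ihA i hic p (not_le.mp hlt))
      · by_contra hlt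
        exact h2 (B.af_spec j i (f (r + 1)) q (by rw [haj]; exact not_le.mp hlt))
    refine ⟨?_, ?_, ?_⟩
    · -- leTwo bound
      intro i hne
      rw [B.aprod_succ f (r + 1) i] at hne
      have hex : ∃ i', B.aprod f (r + 1) i' * B.h i' (f (r + 1)) i ≠ 0 := by
        by_contra hall
        push_neg at hall
        exact hne (Finset.sum_eq_zero fun i' _ => hall i')
      obtain ⟨i', hi'⟩ := hex
      exact (B.leTwo_of_h (right_ne_zero_of_mul hi')).trans
        (ihB i' (left_ne_zero_of_mul hi'))
    · -- degree bound
      intro j hj p hp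
      rw [B.aprod_succ f (r + 1) j]
      show lcoeff (∑ i', B.aprod f (r + 1) i' * B.h i' (f (r + 1)) j) p = 0
      rw [lcoeff_sum']
      refine Finset.sum_eq_zero fun i _ => ?_
      rw [lcoeff_mul']
      refine Finset.sum_eq_zero fun pp _ => ?_
      by_contra hne
      obtain ⟨_, hb1, hb2⟩ := key j hj i pp (p - pp) hne
      push_cast at hp
      linarith
    · -- lowest coefficient
      intro j hj
      rw [B.aprod_succ f (r + 1) j, lcoeff_sum']
      have per_i : ∀ i : I,
          lcoeff (B.aprod f (r + 1) i * B.h i (f (r + 1)) j) (-(((r : ℕ) + 1 : ℤ) * (a0 : ℤ)))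
          = if i ∈ c then
              lcoeff (B.aprod f (r + 1) i) (-((r : ℤ) * (a0 : ℤ)))
                * lcoeff (B.h i (f (r + 1)) j) (-(a0 : ℤ))
            else 0 := by
        intro i
        by_cases hic : i ∈ c
        · rw [if_pos hic]
          have harith : -(((r : ℕ) + 1 : ℤ) * (a0 : ℤ))
              = (-((r : ℤ) * (a0 : ℤ))) + (-(a0 : ℤ)) := by ring
          rw [harith]
          refine lcoeff_mul_low' _ _ _ _ (fun p hp => ihA i hic p hp) (fun q hq => ?_)
          exact B.af_spec j i (f (r + 1)) q (by rw [ha0 j hj]; exact hq)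
        · rw [if_neg hic, lcoeff_mul']
          refine Finset.sum_eq_zero fun pp _ => ?_
          by_contra hne
          exact hic (key j hj i pp (-(((r : ℕ) + 1 : ℤ) * (a0 : ℤ)) - pp) hne).1
      have cast_eq : -(((r + 1 : ℕ) : ℤ) * (a0 : ℤ)) = -(((r : ℕ) + 1 : ℤ) * (a0 : ℤ)) := by
        push_cast; ring
      rw [cast_eq, Finset.sum_congr rfl fun i _ => per_i i]
      have step2 : ∀ i : I,
          (if i ∈ c then
            lcoeff (B.aprod f (r + 1) i) (-((r : ℤ) * (a0 : ℤ)))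
              * lcoeff (B.h i (f (r + 1)) j) (-(a0 : ℤ))
          else 0)
          = B.tprod f (r + 1) i * B.hstar i (f (r + 1)) (B.einv j) := by
        intro i
        have hstar_val : B.hstar i (f (r + 1)) (B.einv j)
            = lcoeff (B.h i (f (r + 1)) j) (-(a0 : ℤ)) := by
          rw [B.hstar_eq, ha0 j hj]
        by_cases hic : i ∈ c
        · rw [if_pos hic, ihC i hic, hstar_val]
        · rw [if_neg hic, B.tprod_zero_of_not_mem hB hc f r hf' hic, zero_mul]
      rw [Finset.sum_congr rfl fun i _ => step2 i, ← B.tprod_succ f (r + 1) j]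

end BasedAlgebra

/-- Lusztig 1.10(c),(d). Let `𝐜` be a two-sided cell of an excellent
based `A`-algebra, with `a`-function constant equal to `a₀` on `𝐜`. Let
`b_{i_1} ⋯ b_{i_r} = ∑_{i,k} N(i,k) v^k b_i` with all `i_u ∈ 𝐜` (here `r = r₀ + 1 ≥ 1`,
`i_u = f (u-1)`). Then for `i ∈ 𝐜`, `N(i, -(r-1)a₀)` equals the sum over all sequences
`j_1, …, j_r` in `𝐜` with `j_1 = i_1`, `j_r = i` of
`h*_{j_1,i_2,j_2^!} ⋯ h*_{j_{r-1},i_r,j_r^!}`; equivalently, in `𝔄^∞`,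
`t_{i_1} ⋯ t_{i_r} = ∑_{i ∈ 𝐜} N(i, -(r-1)a₀) t_i`. -/
theorem statement7 {I : Type} [Fintype I] [DecidableEq I]
    (B : BasedAlgebra I) (hB : B.Excellent)
    (c : Set I) (hc : B.IsTwoCell c) (a0 : ℕ) (ha0 : ∀ i ∈ c, B.af i = a0)
    (r0 : ℕ) (f : ℕ → I) (hf : ∀ u ≤ r0, f u ∈ c) :
    (∀ i ∈ c,
      lcoeff (B.aprod f (r0 + 1) i) (-((r0 : ℤ) * (a0 : ℤ))) =
        ∑ j : Fin (r0 + 1) → I,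
          if (∀ u, j u ∈ c) ∧ j 0 = f 0 ∧ j (Fin.last r0) = i then
            ∏ u ∈ Finset.range r0,
              B.hstar (j (u : Fin (r0 + 1))) (f (u + 1))
                (B.einv (j ((u + 1 : ℕ) : Fin (r0 + 1))))
          else 0) ∧
    (B.tprod f (r0 + 1) =
      fun i => if i ∈ c then lcoeff (B.aprod f (r0 + 1) i) (-((r0 : ℤ) * (a0 : ℤ))) else 0) := by
  obtain ⟨hBle, hA, hC⟩ := B.main_induction hB hc a0 ha0 f r0 hf
  constructor
  · intro i hi
    rw [hC i hi]
    exact B.tprod_eq_sum hB hc f r0 hf i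
  · funext i
    by_cases hi : i ∈ c
    · rw [if_pos hi]
      exact (hC i hi).symm
    · rw [if_neg hi]
      exact B.tprod_zero_of_not_mem hB hc f r0 hf hi
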